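/- Let G = (V,E) be a finite graph with orientation ε, and let A, B be finite abelian groups of orders p, q. The number of nowhere-zero tension-flows, i.e., pairs (f,g) with f an A-tension and g a B-flow of (G,ε) such that (f(e),g(e)) ≠ (0,0) for every edge e, equals ∑_{X ⊆ E} (−1)^{|X|} p^{r(E) − r(X)} q^{n(E−X)}, where r(X) is the rank (number of vertices minus number of components of the spanning subgraph (V,X)) and n(Y) = |Y| − r(Y) is the nullity. In particular this count depends only on p and q, not on ε or the group structures of A and B. -/

import Mathlib

open Finset
open scoped Classical


/-- `f : E → A` is a tension of the digraph `tl, hd : E → V`: it is the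
coboundary of a potential `p : V → A`. -/
def IsTension {V E A : Type} [AddCommGroup A] (tl hd : E → V) (f : E → A) : Prop :=
  ∃ p : V → A, ∀ e, f e = p (tl e) - p (hd e)

/-- `g : E → B` is a flow of the digraph `tl, hd : E → V`: conservation holds
at every vertex. -/
def IsFlow {V E B : Type} [Fintype E] [DecidableEq V] [AddCommGroup B]
    (tl hd : E → V) (g : E → B) : Prop :=
  ∀ v : V, ∑ e ∈ Finset.univ.filter (fun e => tl e = v), g e
         = ∑ e ∈ Finset.univ.filter (fun e => hd e = v), g e

/-- The rank `r⟨X⟩ = |V| - c⟨X⟩` of the spanning subgraph `(V, X)`, where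
`c⟨X⟩` is its number of connected components. -/
noncomputable def grank {V E : Type} [Fintype V] (tl hd : E → V) (X : Finset E) : ℕ :=
  Fintype.card V -
    Nat.card (Quot (fun a b : V =>
      ∃ e ∈ X, (tl e = a ∧ hd e = b) ∨ (tl e = b ∧ hd e = a)))

namespace TF

variable {V E : Type} (tl hd : E → V)

def rel (X : Finset E) (a b : V) : Prop :=
  ∃ e ∈ X, (tl e = a ∧ hd e = b) ∨ (tl e = b ∧ hd e = a)

lemma grank_eq [Fintype V] (X : Finset E) :
    grank tl hd X = Fintype.card V - Nat.card (Quot (rel tl hd X)) := rfl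

instance finQuot [Finite V] (X : Finset E) : Finite (Quot (rel tl hd X)) :=
  Finite.of_surjective (Quot.mk _) (fun c => Quot.exists_rep c)

def qmap {X Y : Finset E} (h : X ⊆ Y) : Quot (rel tl hd X) → Quot (rel tl hd Y) :=
  Quot.lift (Quot.mk _) (fun a b hab => Quot.sound (by
    obtain ⟨e, he, h'⟩ := hab; exact ⟨e, h he, h'⟩))

lemma qmap_surjective {X Y : Finset E} (h : X ⊆ Y) : Function.Surjective (qmap tl hd h) := by
  intro c; obtain ⟨v, rfl⟩ := Quot.exists_rep c; exact ⟨Quot.mk _ v, rfl⟩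

lemma card_quot_le [Finite V] {X Y : Finset E} (h : X ⊆ Y) :
    Nat.card (Quot (rel tl hd Y)) ≤ Nat.card (Quot (rel tl hd X)) :=
  Nat.card_le_card_of_surjective _ (qmap_surjective tl hd h)

lemma card_quot_le_cardV [Fintype V] (X : Finset E) :
    Nat.card (Quot (rel tl hd X)) ≤ Fintype.card V := by
  rw [← Nat.card_eq_fintype_card]
  exact Nat.card_le_card_of_surjective _ (fun c => Quot.exists_rep c)


section Tension

variable {V E A : Type} (tl hd : E → V) [AddCommGroup A]

def dmap (X : Finset E) : (Quot (rel tl hd X) → A) →+ (E → A) :=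
  AddMonoidHom.mk' (fun qf e => qf (Quot.mk _ (tl e)) - qf (Quot.mk _ (hd e)))
    (by intro a b; funext e; simp only [Pi.add_apply]; abel)

lemma dmap_apply (X : Finset E) (qf : Quot (rel tl hd X) → A) (e : E) :
    dmap tl hd (A := A) X qf e = qf (Quot.mk _ (tl e)) - qf (Quot.mk _ (hd e)) := rfl

lemma mem_range_dmap (X : Finset E) (f : E → A) :
    f ∈ (dmap tl hd (A := A) X).range ↔ (IsTension tl hd f ∧ ∀ e ∈ X, f e = 0) := by
  constructor
  · rintro ⟨qf, rfl⟩
    refine ⟨⟨fun v => qf (Quot.mk _ v), fun e => rfl⟩, fun e he => ?_⟩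
    have : Quot.mk (rel tl hd X) (tl e) = Quot.mk _ (hd e) :=
      Quot.sound ⟨e, he, Or.inl ⟨rfl, rfl⟩⟩
    simp [dmap_apply, this]
  · rintro ⟨⟨p, hp⟩, hz⟩
    have hresp : ∀ a b, rel tl hd X a b → p a = p b := by
      rintro a b ⟨e, he, h | h⟩
      · have := hz e he; rw [hp e, h.1, h.2] at this; exact sub_eq_zero.mp this
      · have := hz e he; rw [hp e, h.1, h.2] at this; exact (sub_eq_zero.mp this).symm
    refine ⟨Quot.lift p hresp, funext fun e => ?_⟩
    rw [dmap_apply]; exact (hp e).symm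

noncomputable def kerEquivDmap [Fintype E] (X : Finset E) :
    (dmap tl hd (A := A) X).ker ≃ (Quot (rel tl hd Finset.univ) → A) where
  toFun qh := Quot.lift (fun v => qh.1 (Quot.mk _ v)) (by
    rintro a b ⟨e, _, h | h⟩
    · have h0 := congrFun (AddMonoidHom.mem_ker.mp qh.2) e
      rw [dmap_apply] at h0
      have := sub_eq_zero.mp h0
      rw [← h.1, ← h.2]; exact this
    · have h0 := congrFun (AddMonoidHom.mem_ker.mp qh.2) e
      rw [dmap_apply] at h0
      have := sub_eq_zero.mp h0
      rw [← h.1, ← h.2]; exact this.symm)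
  invFun h := ⟨h ∘ qmap tl hd (Finset.subset_univ X), by
    rw [AddMonoidHom.mem_ker]; funext e
    rw [dmap_apply]
    have : qmap tl hd (Finset.subset_univ X) (Quot.mk _ (tl e))
        = qmap tl hd (Finset.subset_univ X) (Quot.mk _ (hd e)) := by
      show Quot.mk (rel tl hd Finset.univ) (tl e) = Quot.mk _ (hd e)
      exact Quot.sound ⟨e, Finset.mem_univ e, Or.inl ⟨rfl, rfl⟩⟩
    simp [Function.comp, this]⟩
  left_inv := by
    rintro ⟨q, hq⟩
    apply Subtype.ext
    funext c
    induction c using Quot.ind with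
    | _ v => rfl
  right_inv := by
    intro h
    funext c
    induction c using Quot.ind with
    | _ v => rfl

lemma nat_aux (T pc cu cX nV : ℕ) (hpos : 0 < pc) (hcu : cu ≤ cX) (hcX : cX ≤ nV)
    (hkey : T * pc ^ cu = pc ^ cX) : T = pc ^ ((nV - cu) - (nV - cX)) := by
  have hexp : (nV - cu) - (nV - cX) = cX - cu := by omega
  rw [hexp]
  have h2 : pc ^ cX = pc ^ (cX - cu) * pc ^ cu := by
    rw [← pow_add, Nat.sub_add_cancel hcu]
  rw [h2] at hkey
  exact Nat.eq_of_mul_eq_mul_right (pow_pos hpos _) hkey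

lemma card_tension [Fintype V] [Fintype E] [Fintype A] (X : Finset E) :
    Nat.card {f : E → A // IsTension tl hd f ∧ ∀ e ∈ X, f e = 0}
      = (Fintype.card A) ^ (grank tl hd Finset.univ - grank tl hd X) := by
  have hT : Nat.card {f : E → A // IsTension tl hd f ∧ ∀ e ∈ X, f e = 0}
      = Nat.card (dmap tl hd (A := A) X).range :=
    Nat.card_congr (Equiv.subtypeEquivRight (fun f => (mem_range_dmap tl hd X f).symm))
  have hdom : Nat.card (Quot (rel tl hd X) → A)
      = Fintype.card A ^ Nat.card (Quot (rel tl hd X)) := by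
    rw [Nat.card_fun, Nat.card_eq_fintype_card]
  have hker : Nat.card (dmap tl hd (A := A) X).ker
      = Fintype.card A ^ Nat.card (Quot (rel tl hd (Finset.univ : Finset E))) := by
    rw [Nat.card_congr (kerEquivDmap tl hd X), Nat.card_fun, Nat.card_eq_fintype_card]
  have hiso : Nat.card (Quot (rel tl hd X) → A)
      = Nat.card (dmap tl hd (A := A) X).range * Nat.card (dmap tl hd (A := A) X).ker := by
    have h1 := AddSubgroup.card_eq_card_quotient_mul_card_addSubgroup (dmap tl hd (A := A) X).ker
    have h2 : Nat.card ((Quot (rel tl hd X) → A) ⧸ (dmap tl hd (A := A) X).ker)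
        = Nat.card (dmap tl hd (A := A) X).range :=
      Nat.card_congr (QuotientAddGroup.quotientKerEquivRange (dmap tl hd (A := A) X)).toEquiv
    rw [h1, h2]
  have hkey : Nat.card (dmap tl hd (A := A) X).range
      * Fintype.card A ^ Nat.card (Quot (rel tl hd (Finset.univ : Finset E)))
      = Fintype.card A ^ Nat.card (Quot (rel tl hd X)) := by
    rw [← hker, ← hiso, hdom]
  rw [hT, grank_eq, grank_eq]
  exact nat_aux _ _ _ _ _ Fintype.card_pos (card_quot_le tl hd (Finset.subset_univ X))
    (card_quot_le_cardV tl hd X) hkey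

end Tension


section Flow

set_option linter.unusedSectionVars false

variable {V E B : Type} (tl hd : E → V) [AddCommGroup B] [Fintype E] [DecidableEq V] [DecidableEq E]

noncomputable def bmap (Y : Finset E) : ((↥Y : Type) → B) →+ (V → B) :=
  AddMonoidHom.mk' (fun h v =>
      (∑ e ∈ Y.attach.filter (fun e => tl e.1 = v), h e)
      - ∑ e ∈ Y.attach.filter (fun e => hd e.1 = v), h e)
    (by
      intro a b; funext v
      simp only [Pi.add_apply, Finset.sum_add_distrib]
      abel)

lemma bmap_apply (Y : Finset E) (h : (↥Y : Type) → B) (v : V) :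
    bmap tl hd (B := B) Y h v
      = (∑ e ∈ Y.attach.filter (fun e => tl e.1 = v), h e)
      - ∑ e ∈ Y.attach.filter (fun e => hd e.1 = v), h e := rfl

/-- key sum identity for functions vanishing off `Y`. -/
lemma sum_attach_eq (Y : Finset E) (t : E → V) (g : E → B) (hz : ∀ e ∉ Y, g e = 0) (v : V) :
    ∑ e ∈ Y.attach.filter (fun e => t e.1 = v), g e.1
      = ∑ e ∈ Finset.univ.filter (fun e => t e = v), g e := by
  rw [Finset.sum_filter, Finset.sum_attach Y (fun e => if t e = v then g e else 0),
    Finset.sum_filter]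
  apply Finset.sum_subset (Finset.subset_univ Y)
  intro e _ he
  rw [hz e he]
  exact ite_self _

noncomputable def flowEquiv (X : Finset E) :
    {g : E → B // IsFlow tl hd g ∧ ∀ e ∈ X, g e = 0} ≃ (bmap tl hd (B := B) Xᶜ).ker where
  toFun gh := ⟨fun e => gh.1 e.1, by
    have hz' : ∀ e ∉ Xᶜ, gh.1 e = 0 := fun e he => gh.2.2 e (by simpa using he)
    rw [AddMonoidHom.mem_ker]; funext v
    rw [bmap_apply, Pi.zero_apply,
      sum_attach_eq (Xᶜ) tl gh.1 hz' v, sum_attach_eq (Xᶜ) hd gh.1 hz' v,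
      gh.2.1 v, sub_self]⟩
  invFun hk := ⟨fun e => if he : e ∈ Xᶜ then hk.1 ⟨e, he⟩ else 0, by
    set g : E → B := fun e => if he : e ∈ Xᶜ then hk.1 ⟨e, he⟩ else 0 with hg
    have hz' : ∀ e ∉ Xᶜ, g e = 0 := fun e he => dif_neg he
    have hrestrict : ∀ e : (↥(Xᶜ) : Type), g e.1 = hk.1 e := fun e => dif_pos e.2
    constructor
    · intro v
      rw [← sum_attach_eq (Xᶜ) tl g hz' v, ← sum_attach_eq (Xᶜ) hd g hz' v]
      have h0 := congrFun (AddMonoidHom.mem_ker.mp hk.2) v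
      rw [bmap_apply, Pi.zero_apply, sub_eq_zero] at h0
      rw [Finset.sum_congr rfl (fun e _ => hrestrict e), h0,
        Finset.sum_congr rfl (fun e _ => hrestrict e)]
    · intro e he
      exact hz' e (by simpa using he)⟩
  left_inv := by
    rintro ⟨g, hf, hz⟩
    apply Subtype.ext
    funext e
    dsimp only
    by_cases he : e ∈ Xᶜ
    · rw [dif_pos he]
    · rw [dif_neg he]
      exact (hz e (by simpa using he)).symm
  right_inv := by
    rintro ⟨h, hker⟩
    apply Subtype.ext
    funext e
    dsimp only
    rw [dif_pos e.2]

noncomputable def smap [Fintype V] (Y : Finset E) : (V → B) →+ ((Quot (rel tl hd Y)) → B) :=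
  AddMonoidHom.mk' (fun h c => ∑ v ∈ Finset.univ.filter (fun v => Quot.mk _ v = c), h v)
    (by intro a b; funext c; simp [Finset.sum_add_distrib])

lemma smap_apply [Fintype V] (Y : Finset E) (h : V → B) (c : Quot (rel tl hd Y)) :
    smap tl hd (B := B) Y h c = ∑ v ∈ Finset.univ.filter (fun v => Quot.mk _ v = c), h v := rfl

noncomputable def qrep [Fintype V] (Y : Finset E) : Quot (rel tl hd Y) → V :=
  Function.surjInv (f := Quot.mk _) (fun c => Quot.exists_rep c)

lemma qrep_spec [Fintype V] (Y : Finset E) (c : Quot (rel tl hd Y)) :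
    Quot.mk (rel tl hd Y) (qrep tl hd Y c) = c :=
  Function.surjInv_eq _ c

lemma smap_surjective [Fintype V] (Y : Finset E) :
    Function.Surjective (smap tl hd (B := B) Y) := by
  intro φ
  refine ⟨fun v => if qrep tl hd Y (Quot.mk _ v) = v then φ (Quot.mk _ v) else 0, ?_⟩
  funext c
  rw [smap_apply]
  have hmem : qrep tl hd Y c ∈ Finset.univ.filter (fun v => Quot.mk (rel tl hd Y) v = c) :=
    Finset.mem_filter.mpr ⟨Finset.mem_univ _, qrep_spec tl hd Y c⟩
  rw [Finset.sum_eq_single_of_mem _ hmem (fun b hb hbne => ?_)]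
  · rw [qrep_spec, if_pos rfl]
  · have hbc : Quot.mk (rel tl hd Y) b = c := (Finset.mem_filter.mp hb).2
    rw [hbc, if_neg (fun hc => hbne hc.symm)]


lemma smap_bmap [Fintype V] (Y : Finset E) (h : (↥Y : Type) → B) :
    smap tl hd (B := B) Y (bmap tl hd (B := B) Y h) = 0 := by
  funext c
  rw [smap_apply, Pi.zero_apply]
  have hsplit : ∀ t : E → V,
      ∑ v ∈ Finset.univ.filter (fun v => Quot.mk (rel tl hd Y) v = c),
        ∑ e ∈ Y.attach.filter (fun e => t e.1 = v), h e
      = ∑ e ∈ Y.attach.filter (fun e => Quot.mk (rel tl hd Y) (t e.1) = c), h e := by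
    intro t
    rw [Finset.sum_fiberwise_eq_sum_filter Y.attach
      (Finset.univ.filter (fun v => Quot.mk (rel tl hd Y) v = c)) (fun e => t e.1) h]
    apply Finset.sum_congr _ (fun _ _ => rfl)
    apply Finset.filter_congr
    intro e _
    simp only [Finset.mem_filter, Finset.mem_univ, true_and]
  have : ∀ v, bmap tl hd (B := B) Y h v
      = (∑ e ∈ Y.attach.filter (fun e => tl e.1 = v), h e)
      - ∑ e ∈ Y.attach.filter (fun e => hd e.1 = v), h e := fun v => rfl
  rw [Finset.sum_congr rfl (fun v _ => this v), Finset.sum_sub_distrib, hsplit tl, hsplit hd]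
  have hfe : Y.attach.filter (fun e => Quot.mk (rel tl hd Y) (tl e.1) = c)
      = Y.attach.filter (fun e => Quot.mk (rel tl hd Y) (hd e.1) = c) := by
    apply Finset.filter_congr
    intro e _
    have : Quot.mk (rel tl hd Y) (tl e.1) = Quot.mk (rel tl hd Y) (hd e.1) :=
      Quot.sound ⟨e.1, e.2, Or.inl ⟨rfl, rfl⟩⟩
    rw [this]
  rw [hfe, sub_self]

/-- single-vertex difference functions are in the range of the boundary map. -/
lemma delta_mem_range [Fintype V] (Y : Finset E) (a b : V)
    (hab : Quot.mk (rel tl hd Y) a = Quot.mk (rel tl hd Y) b) (t : B) :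
    (fun v => (if a = v then t else 0) - (if b = v then t else 0))
      ∈ (bmap tl hd (B := B) Y).range := by
  have base : ∀ (e0 : (↥Y : Type)),
      (fun v => (if tl e0.1 = v then t else 0) - (if hd e0.1 = v then t else 0))
        ∈ (bmap tl hd (B := B) Y).range := by
    intro e0
    refine ⟨fun e => if e = e0 then t else 0, ?_⟩
    funext v
    rw [bmap_apply]
    congr 1
    · rw [Finset.sum_ite_eq' (Y.attach.filter (fun e => tl e.1 = v)) e0 (fun _ => t)]
      by_cases hv : tl e0.1 = v
      · rw [if_pos, if_pos hv]
        exact Finset.mem_filter.mpr ⟨Finset.mem_attach _ _, hv⟩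
      · rw [if_neg, if_neg hv]
        intro hmem
        exact hv (Finset.mem_filter.mp hmem).2
    · rw [Finset.sum_ite_eq' (Y.attach.filter (fun e => hd e.1 = v)) e0 (fun _ => t)]
      by_cases hv : hd e0.1 = v
      · rw [if_pos, if_pos hv]
        exact Finset.mem_filter.mpr ⟨Finset.mem_attach _ _, hv⟩
      · rw [if_neg, if_neg hv]
        intro hmem
        exact hv (Finset.mem_filter.mp hmem).2
  have key : ∀ x y : V, Relation.EqvGen (rel tl hd Y) x y →
      (fun v => (if x = v then t else 0) - (if y = v then t else 0))
        ∈ (bmap tl hd (B := B) Y).range := by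
    intro x y hxy
    induction hxy with
    | rel x y hr =>
      obtain ⟨e, he, h' | h'⟩ := hr
      · have := base ⟨e, he⟩
        rw [show tl e = x from h'.1, show hd e = y from h'.2] at this
        exact this
      · have := base ⟨e, he⟩
        rw [show tl e = y from h'.1, show hd e = x from h'.2] at this
        have hneg := AddSubgroup.neg_mem _ this
        have heq : (fun v => (if x = v then t else 0) - (if y = v then t else 0))
            = -(fun v => (if y = v then t else 0) - (if x = v then t else 0)) := by
          funext v; simp only [Pi.neg_apply, neg_sub]
        rw [heq]; exact hneg
    | refl x =>
      have heq : (fun v => (if x = v then t else 0) - (if x = v then t else 0))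
          = (0 : V → B) := by funext v; rw [sub_self]; rfl
      rw [heq]; exact AddSubgroup.zero_mem _
    | symm x y _ ih =>
      have hneg := AddSubgroup.neg_mem _ ih
      have heq : (fun v => (if y = v then t else 0) - (if x = v then t else 0))
          = -(fun v => (if x = v then t else 0) - (if y = v then t else 0)) := by
        funext v; simp only [Pi.neg_apply, neg_sub]
      rw [heq]; exact hneg
    | trans x y z _ _ ih1 ih2 =>
      have hadd := AddSubgroup.add_mem _ ih1 ih2
      have heq : (fun v => (if x = v then t else 0) - (if z = v then t else 0))
          = (fun v => (if x = v then t else 0) - (if y = v then t else 0))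
            + (fun v => (if y = v then t else 0) - (if z = v then t else 0)) := by
        funext v; simp only [Pi.add_apply]; abel
      rw [heq]; exact hadd
  exact key a b (Quot.eqvGen_exact hab)

lemma ker_smap_le_range_bmap [Fintype V] (Y : Finset E) (h : V → B)
    (hh : smap tl hd (B := B) Y h = 0) : h ∈ (bmap tl hd (B := B) Y).range := by
  have hdecomp : h = ∑ v ∈ Finset.univ, (fun w =>
      (if v = w then h v else 0) - (if qrep tl hd Y (Quot.mk _ v) = w then h v else 0)) := by
    funext w
    rw [Finset.sum_apply]
    have : ∀ v ∈ Finset.univ, ((fun w =>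
        (if v = w then h v else 0) - (if qrep tl hd Y (Quot.mk _ v) = w then h v else 0)) w)
        = (if v = w then h v else 0) - (if qrep tl hd Y (Quot.mk _ v) = w then h v else 0) :=
      fun v _ => rfl
    rw [Finset.sum_congr rfl this, Finset.sum_sub_distrib]
    have h1 : ∑ v ∈ Finset.univ, (if v = w then h v else 0) = h w := by
      rw [Finset.sum_ite_eq' Finset.univ w h]
      exact if_pos (Finset.mem_univ w)
    have h2 : ∑ v ∈ Finset.univ, (if qrep tl hd Y (Quot.mk _ v) = w then h v else 0) = 0 := by
      rw [← Finset.sum_filter]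
      by_cases hr : qrep tl hd Y (Quot.mk (rel tl hd Y) w) = w
      · have hfeq : Finset.univ.filter (fun v => qrep tl hd Y (Quot.mk (rel tl hd Y) v) = w)
            = Finset.univ.filter (fun v =>
                Quot.mk (rel tl hd Y) v = Quot.mk (rel tl hd Y) w) := by
          apply Finset.filter_congr
          intro v _
          constructor
          · intro hv
            have : Quot.mk (rel tl hd Y) v
                = Quot.mk (rel tl hd Y) (qrep tl hd Y (Quot.mk (rel tl hd Y) v)) :=
              (qrep_spec tl hd Y _).symm
            rw [this, hv]
          · intro hv
            rw [hv, hr]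
        rw [hfeq]
        have := congrFun hh (Quot.mk (rel tl hd Y) w)
        rw [smap_apply, Pi.zero_apply] at this
        exact this
      · apply Finset.sum_eq_zero
        intro v hv
        exfalso
        have hv' := (Finset.mem_filter.mp hv).2
        have : Quot.mk (rel tl hd Y) v = Quot.mk (rel tl hd Y) w := by
          have : Quot.mk (rel tl hd Y) v
              = Quot.mk (rel tl hd Y) (qrep tl hd Y (Quot.mk (rel tl hd Y) v)) :=
            (qrep_spec tl hd Y _).symm
          rw [this, hv']
        rw [← this] at hr
        exact hr hv'
    rw [h1, h2, sub_zero]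
  rw [hdecomp]
  apply AddSubgroup.sum_mem
  intro v _
  apply delta_mem_range
  rw [qrep_spec]


lemma flow_aux (K R q m cY nV : ℕ) (hq : 0 < q)
    (h1 : K * R = q ^ m) (h2 : R * q ^ cY = q ^ nV) (hcY : cY ≤ nV) :
    K = q ^ (m - (nV - cY)) := by
  have hkey : K * q ^ nV = q ^ (m + cY) := by
    rw [← h2, ← mul_assoc, h1, ← pow_add]
  by_cases hq1 : q = 1
  · subst hq1
    simp only [one_pow] at h1 ⊢
    have hKle : K ∣ 1 := Dvd.intro _ h1
    exact Nat.eq_one_of_dvd_one hKle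
  · have h2q : 2 ≤ q := by omega
    have hdvd : q ^ nV ∣ q ^ (m + cY) := Dvd.intro_left K hkey
    have hle : nV ≤ m + cY := (Nat.pow_dvd_pow_iff_le_right h2q).mp hdvd
    have hexp : m - (nV - cY) = m + cY - nV := by omega
    rw [hexp]
    have : q ^ (m + cY) = q ^ (m + cY - nV) * q ^ nV := by
      rw [← pow_add, Nat.sub_add_cancel hle]
    rw [this] at hkey
    exact Nat.eq_of_mul_eq_mul_right (pow_pos hq _) hkey

lemma card_flow [Fintype V] [Fintype B] (X : Finset E) :
    Nat.card {g : E → B // IsFlow tl hd g ∧ ∀ e ∈ X, g e = 0}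
      = (Fintype.card B) ^ ((Xᶜ : Finset E).card - grank tl hd Xᶜ) := by
  set Y : Finset E := Xᶜ with hY
  -- K = Nat.card ker bmap
  have hK : Nat.card {g : E → B // IsFlow tl hd g ∧ ∀ e ∈ X, g e = 0}
      = Nat.card (bmap tl hd (B := B) Y).ker :=
    Nat.card_congr (flowEquiv tl hd X)
  -- first isomorphism for bmap
  have hiso1 : Nat.card ((↥Y : Type) → B)
      = Nat.card (bmap tl hd (B := B) Y).range * Nat.card (bmap tl hd (B := B) Y).ker := by
    have h1 := AddSubgroup.card_eq_card_quotient_mul_card_addSubgroup (bmap tl hd (B := B) Y).ker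
    have h2 : Nat.card (((↥Y : Type) → B) ⧸ (bmap tl hd (B := B) Y).ker)
        = Nat.card (bmap tl hd (B := B) Y).range :=
      Nat.card_congr (QuotientAddGroup.quotientKerEquivRange (bmap tl hd (B := B) Y)).toEquiv
    rw [h1, h2]
  have hdomY : Nat.card ((↥Y : Type) → B) = Fintype.card B ^ Y.card := by
    rw [Nat.card_fun, Nat.card_eq_fintype_card, Nat.card_eq_finsetCard]
  -- range bmap = ker smap
  have hrange : Nat.card (bmap tl hd (B := B) Y).range
      = Nat.card (smap tl hd (B := B) Y).ker := by
    apply Nat.card_congr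
    apply Equiv.subtypeEquivRight
    intro h
    constructor
    · rintro ⟨x, rfl⟩
      exact AddMonoidHom.mem_ker.mpr (smap_bmap tl hd Y x)
    · intro hker
      exact ker_smap_le_range_bmap tl hd Y h (AddMonoidHom.mem_ker.mp hker)
  -- first isomorphism for smap, who is surjective
  have hiso2 : Nat.card (V → B)
      = Nat.card (Quot (rel tl hd Y) → B) * Nat.card (smap tl hd (B := B) Y).ker := by
    have h1 := AddSubgroup.card_eq_card_quotient_mul_card_addSubgroup (smap tl hd (B := B) Y).ker
    have h2 : Nat.card ((V → B) ⧸ (smap tl hd (B := B) Y).ker)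
        = Nat.card (smap tl hd (B := B) Y).range :=
      Nat.card_congr (QuotientAddGroup.quotientKerEquivRange (smap tl hd (B := B) Y)).toEquiv
    have h3 : Nat.card (smap tl hd (B := B) Y).range = Nat.card (Quot (rel tl hd Y) → B) := by
      apply Nat.card_congr
      refine Equiv.trans (Equiv.subtypeEquivRight (q := fun _ => True) (fun x => ?_))
        (Equiv.subtypeUnivEquiv (fun _ => trivial))
      simp only [iff_true]
      exact smap_surjective tl hd Y x
    rw [h1, h2, h3]
  have hdomV : Nat.card (V → B) = Fintype.card B ^ Fintype.card V := by
    rw [Nat.card_fun, Nat.card_eq_fintype_card, Nat.card_eq_fintype_card]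
  have hquot : Nat.card (Quot (rel tl hd Y) → B)
      = Fintype.card B ^ Nat.card (Quot (rel tl hd Y)) := by
    rw [Nat.card_fun, Nat.card_eq_fintype_card]
  rw [hK, grank_eq]
  apply flow_aux _ _ _ _ (Nat.card (Quot (rel tl hd Y))) (Fintype.card V) Fintype.card_pos
  · rw [mul_comm, ← hiso1, hdomY]
  · rw [hrange, mul_comm, ← hquot, ← hiso2, hdomV]
  · exact card_quot_le_cardV tl hd Y

end Flow

end TF

/-- The number of nowhere-zero tension-flows `(f, g)` with values in finite
abelian groups `A, B` of orders `p, q` equals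
`∑_{X ⊆ E} (-1)^{|X|} p^{r(E) - r(X)} q^{n(E - X)}`; in particular it depends
only on `p` and `q`. -/
theorem stmt7 {V E A B : Type} [Fintype V] [Fintype E] [DecidableEq V] [DecidableEq E]
    [AddCommGroup A] [Fintype A] [AddCommGroup B] [Fintype B]
    (tl hd : E → V) (p q : ℕ) (hp : Fintype.card A = p) (hq : Fintype.card B = q) :
    (Nat.card {fg : (E → A) × (E → B) //
        IsTension tl hd fg.1 ∧ IsFlow tl hd fg.2 ∧
        ∀ e : E, (fg.1 e, fg.2 e) ≠ (0, 0)} : ℤ)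
    = ∑ X : Finset E, (-1 : ℤ) ^ X.card *
        (p : ℤ) ^ (grank tl hd Finset.univ - grank tl hd X) *
        (q : ℤ) ^ ((Xᶜ).card - grank tl hd Xᶜ) := by
  classical
  set PT : (E → A) × (E → B) → Prop :=
    fun fg => IsTension tl hd fg.1 ∧ IsFlow tl hd fg.2 with hPT
  set NZ : (E → A) × (E → B) → Prop :=
    fun fg => ∀ e : E, (fg.1 e, fg.2 e) ≠ (0, 0) with hNZ
  set S : Finset ((E → A) × (E → B)) := Finset.univ.filter PT with hS
  -- Step A
  have hA : Nat.card {fg : (E → A) × (E → B) //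
      IsTension tl hd fg.1 ∧ IsFlow tl hd fg.2 ∧ ∀ e : E, (fg.1 e, fg.2 e) ≠ (0, 0)}
      = ∑ fg ∈ S, (if NZ fg then 1 else 0) := by
    rw [Nat.card_eq_fintype_card, Fintype.card_subtype]
    have hfeq : Finset.univ.filter (fun fg : (E → A) × (E → B) =>
        IsTension tl hd fg.1 ∧ IsFlow tl hd fg.2 ∧ ∀ e : E, (fg.1 e, fg.2 e) ≠ (0, 0))
        = S.filter NZ := by
      rw [hS, Finset.filter_filter]
      apply Finset.filter_congr
      intro fg _
      constructor
      · rintro ⟨h1, h2, h3⟩; exact ⟨⟨h1, h2⟩, h3⟩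
      · rintro ⟨⟨h1, h2⟩, h3⟩; exact ⟨h1, h2, h3⟩
    rw [hfeq, Finset.card_filter]
  -- Step B
  have hB : ∀ fg : (E → A) × (E → B),
      (if NZ fg then (1 : ℤ) else 0)
      = ∑ X : Finset E, if (∀ e ∈ X, fg.1 e = 0 ∧ fg.2 e = 0)
          then (-1 : ℤ) ^ X.card else 0 := by
    intro fg
    set Z : Finset E := Finset.univ.filter (fun e => fg.1 e = 0 ∧ fg.2 e = 0) with hZ
    have hsub : ∀ X : Finset E, (∀ e ∈ X, fg.1 e = 0 ∧ fg.2 e = 0) ↔ X ∈ Z.powerset := by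
      intro X
      rw [Finset.mem_powerset]
      constructor
      · intro hx e he
        exact Finset.mem_filter.mpr ⟨Finset.mem_univ _, hx e he⟩
      · intro hx e he
        exact (Finset.mem_filter.mp (hx he)).2
    have h1 : (∑ X : Finset E, if (∀ e ∈ X, fg.1 e = 0 ∧ fg.2 e = 0)
        then (-1 : ℤ) ^ X.card else 0)
        = ∑ X ∈ Z.powerset, (-1 : ℤ) ^ X.card := by
      rw [Finset.sum_congr rfl (fun X _ => by rw [if_congr (hsub X) rfl rfl]),
        Finset.sum_ite_mem, Finset.univ_inter]
    rw [h1, Finset.sum_powerset_neg_one_pow_card]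
    congr 1
    rw [eq_iff_iff, hNZ, hZ, Finset.filter_eq_empty_iff]
    constructor
    · intro hnz e _
      intro hc
      exact hnz e (by rw [Prod.mk.injEq]; exact hc)
    · intro hemp e hc
      rw [Prod.mk.injEq] at hc
      exact hemp (Finset.mem_univ e) hc
  -- combine A and B, swap sums
  have hC : (Nat.card {fg : (E → A) × (E → B) //
      IsTension tl hd fg.1 ∧ IsFlow tl hd fg.2 ∧ ∀ e : E, (fg.1 e, fg.2 e) ≠ (0, 0)} : ℤ)
      = ∑ X : Finset E, ∑ fg ∈ S,
          (if (∀ e ∈ X, fg.1 e = 0 ∧ fg.2 e = 0) then (-1 : ℤ) ^ X.card else 0) := by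
    rw [hA]
    push_cast
    rw [Finset.sum_congr rfl (fun fg _ => hB fg)]
    exact Finset.sum_comm
  rw [hC]
  apply Finset.sum_congr rfl
  intro X _
  -- Step D: inner sum equals (-1)^|X| * M X
  have hD : (∑ fg ∈ S,
      (if (∀ e ∈ X, fg.1 e = 0 ∧ fg.2 e = 0) then (-1 : ℤ) ^ X.card else 0))
      = (-1 : ℤ) ^ X.card * (Nat.card {fg : (E → A) × (E → B) //
          (IsTension tl hd fg.1 ∧ ∀ e ∈ X, fg.1 e = 0)
          ∧ (IsFlow tl hd fg.2 ∧ ∀ e ∈ X, fg.2 e = 0)} : ℤ) := by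
    rw [Finset.sum_ite, Finset.sum_const, Finset.sum_const_zero, add_zero, nsmul_eq_mul,
      mul_comm]
    congr 1
    rw [Nat.card_eq_fintype_card, Fintype.card_subtype]
    norm_cast
    apply Finset.card_nbij id
    · intro fg hfg
      simp only [Finset.mem_coe, Finset.mem_filter] at hfg ⊢
      rw [hS, Finset.mem_filter] at hfg
      obtain ⟨⟨_, hpt⟩, hcond⟩ := hfg
      exact ⟨Finset.mem_univ _, ⟨hpt.1, fun e he => (hcond e he).1⟩,
        ⟨hpt.2, fun e he => (hcond e he).2⟩⟩
    · intro a _ b _ h; exact h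
    · intro fg hfg
      simp only [Finset.coe_filter, Set.mem_setOf_eq] at hfg ⊢
      refine ⟨fg, ?_, rfl⟩
      obtain ⟨_, ⟨ht, hfz⟩, ⟨hf, hgz⟩⟩ := hfg
      rw [hS]
      simp only [Finset.mem_filter, Finset.mem_univ, true_and]
      exact ⟨⟨ht, hf⟩, fun e he => ⟨hfz e he, hgz e he⟩⟩
  rw [hD]
  -- Step E: split the product
  have hE : Nat.card {fg : (E → A) × (E → B) //
      (IsTension tl hd fg.1 ∧ ∀ e ∈ X, fg.1 e = 0)
      ∧ (IsFlow tl hd fg.2 ∧ ∀ e ∈ X, fg.2 e = 0)}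
      = Nat.card {f : E → A // IsTension tl hd f ∧ ∀ e ∈ X, f e = 0}
        * Nat.card {g : E → B // IsFlow tl hd g ∧ ∀ e ∈ X, g e = 0} := by
    rw [← Nat.card_prod]
    exact Nat.card_congr (Equiv.subtypeProdEquivProd
      (p := fun f : E → A => IsTension tl hd f ∧ ∀ e ∈ X, f e = 0)
      (q := fun g : E → B => IsFlow tl hd g ∧ ∀ e ∈ X, g e = 0))
  rw [hE, TF.card_tension tl hd X, TF.card_flow tl hd X, hp, hq]
  push_cast
  exact (mul_assoc ((-1 : ℤ) ^ X.card) ((p : ℤ) ^ (grank tl hd Finset.univ - grank tl hd X)) ((q : ℤ) ^ ((Xᶜ).card - grank tl hd Xᶜ))).symm
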